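/- Let Ω_n^N = ∑_{σ ∈ S_n} N^{#σ} σ ∈ ℂ[S_n], where #σ is the number of cycles of σ. If T ∈ End(V^{⊗n}) commutes with the diagonal U(N)-action and T = ρ_N(κ_T) for some κ_T ∈ ℂ[S_n] (Schur–Weyl), then the moment element m_T = ∑_{σ∈S_n} Tr_{V^{⊗n}}(T ρ_N(σ^{-1})) σ satisfies m_T = Ω_n^N * κ_T (convolution in ℂ[S_n]). Consequently, if N ≥ n (so that Ω_n^N is invertible), κ_T = (Ω_n^N)^{-1} * m_T. -/
import Mathlib


/-- Weingarten/moment convolution identity. Here `M σ` is the matrix of the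
permutation action `ρ_N(σ)` of `S_n` on `(ℂ^N)^{⊗n}` in the standard product basis
(indexed by functions `Fin n → Fin N`), `Ω σ = Tr(ρ_N σ) (= N^{#σ})`, and for
`T = ρ_N(κ_T)` the moment element `m_T(σ) = Tr(T ρ_N(σ⁻¹))` satisfies the convolution
identity `m_T = Ω * κ_T`; consequently, if `W` is a convolution inverse of `Ω`
(as exists for `N ≥ n`, the Weingarten function), then `κ_T = W * m_T`. -/
theorem stmt_9 (n N : ℕ) (hN : 1 ≤ N)
    (M : Equiv.Perm (Fin n) → Matrix (Fin n → Fin N) (Fin n → Fin N) ℂ)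
    (hM : ∀ σ g f, M σ g f = if g = f ∘ ⇑(σ⁻¹) then 1 else 0)
    (T : Matrix (Fin n → Fin N) (Fin n → Fin N) ℂ)
    (κ : Equiv.Perm (Fin n) → ℂ)
    (hT : T = ∑ σ : Equiv.Perm (Fin n), κ σ • M σ) :
    let Ω : Equiv.Perm (Fin n) → ℂ := fun σ => (M σ).trace
    let m : Equiv.Perm (Fin n) → ℂ := fun σ => (T * M σ⁻¹).trace
    (∀ β : Equiv.Perm (Fin n), m β = ∑ α : Equiv.Perm (Fin n), Ω (β * α⁻¹) * κ α) ∧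
    (∀ W : Equiv.Perm (Fin n) → ℂ,
      (∀ β : Equiv.Perm (Fin n),
        (∑ α : Equiv.Perm (Fin n), W (β * α⁻¹) * Ω α) = if β = 1 then 1 else 0) →
      ∀ β : Equiv.Perm (Fin n), κ β = ∑ α : Equiv.Perm (Fin n), W (β * α⁻¹) * m α) := by
  intro Ω m
  -- multiplicativity of M
  have hmul : ∀ σ τ : Equiv.Perm (Fin n), M σ * M τ = M (σ * τ) := by
    intro σ τ
    ext g f
    rw [Matrix.mul_apply]
    simp only [hM]
    rw [Finset.sum_eq_single (f ∘ ⇑τ⁻¹)]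
    · simp only [if_pos rfl, mul_one]
      congr 1
      simp [mul_inv_rev, Function.comp, eq_iff_iff]
      constructor <;> intro h <;> funext i <;> exact congrFun h i
    · intro b _ hb
      rw [if_neg hb, mul_zero]
    · intro h; exact absurd (Finset.mem_univ _) h
  -- symmetry of Ω
  have hΩ : ∀ σ : Equiv.Perm (Fin n), Ω σ⁻¹ = Ω σ := by
    intro σ
    simp only [Ω, Matrix.trace, Matrix.diag, hM]
    apply Finset.sum_congr rfl
    intro f _
    congr 1
    simp only [inv_inv, eq_iff_iff]
    constructor
    · intro h; funext i
      have := congrFun h (σ⁻¹ i)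
      simpa using this.symm
    · intro h; funext i
      have := congrFun h (σ i)
      simpa using this.symm
  have hm : ∀ β : Equiv.Perm (Fin n), m β = ∑ α : Equiv.Perm (Fin n), Ω (β * α⁻¹) * κ α := by
    intro β
    have : m β = ∑ α : Equiv.Perm (Fin n), κ α * Ω (α * β⁻¹) := by
      simp only [m, hT, Finset.sum_mul, Matrix.smul_mul, Matrix.trace_sum, Matrix.trace_smul,
        hmul, smul_eq_mul, Ω]
    rw [this]
    apply Finset.sum_congr rfl
    intro α _
    rw [mul_comm]
    congr 1
    rw [← hΩ, mul_inv_rev, inv_inv]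
  refine ⟨hm, ?_⟩
  intro W hW β
  symm
  calc ∑ α : Equiv.Perm (Fin n), W (β * α⁻¹) * m α
      = ∑ α : Equiv.Perm (Fin n), ∑ γ : Equiv.Perm (Fin n),
          W (β * α⁻¹) * (Ω (α * γ⁻¹) * κ γ) := by
        simp only [hm, Finset.mul_sum]
    _ = ∑ γ : Equiv.Perm (Fin n), (∑ α : Equiv.Perm (Fin n),
          W (β * α⁻¹) * Ω (α * γ⁻¹)) * κ γ := by
        rw [Finset.sum_comm]
        simp [Finset.sum_mul, mul_assoc]
    _ = ∑ γ : Equiv.Perm (Fin n), (if β * γ⁻¹ = 1 then 1 else 0) * κ γ := by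
        apply Finset.sum_congr rfl
        intro γ _
        congr 1
        rw [← hW (β * γ⁻¹)]
        rw [← Equiv.sum_comp (Equiv.mulRight γ)]
        apply Finset.sum_congr rfl
        intro δ _
        simp [mul_inv_rev, mul_assoc]
    _ = κ β := by
        rw [Finset.sum_eq_single β]
        · simp
        · intro γ _ hγ
          rw [if_neg (by simp [mul_inv_eq_one]; exact fun h => hγ h.symm), zero_mul]
        · intro h; exact absurd (Finset.mem_univ _) h
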